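/- Consider a reversible reaction graph on c vertices (finite edge set E, maps t, h : E → Fin c with t e ≠ h e, positive constants k⁺, k⁻ : E → ℝ, and Laplacian L as below) with no parallel edges, i.e. distinct edges have distinct underlying unordered vertex pairs {t e, h e}. Let ρ : Fin c → ℝ be strictly positive. Then the matrix L * Matrix.diagonal ρ is symmetric if and only if for every edge e, Real.log (k⁺ e / k⁻ e) = Real.log (ρ (h e)) − Real.log (ρ (t e)). (Equivalence (1) ⟺ (2) of Theorem 2: symmetry of L diag(ρ) is equivalent to Ln K^eq = D̄ᵀ Ln ρ.) -/
import Mathlib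


open Matrix

/-- The weighted Laplacian matrix of a reversible reaction graph on `c` vertices,
with edge set `E`, tail and head maps `t, h`, and forward and reverse reaction
constants `kp, km`. -/
def reactionLaplacian (c : ℕ) {E : Type*} [Fintype E]
    (t h : E → Fin c) (kp km : E → ℝ) : Matrix (Fin c) (Fin c) ℝ :=
  fun i j =>
    if i = j then
      (∑ e ∈ Finset.univ.filter (fun e => t e = j), kp e) +
        (∑ e ∈ Finset.univ.filter (fun e => h e = j), km e)
    else
      -((∑ e ∈ Finset.univ.filter (fun e => t e = j ∧ h e = i), kp e) +
        (∑ e ∈ Finset.univ.filter (fun e => t e = i ∧ h e = j), km e))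

theorem symmetric_iff_log_Keq_eq_Dt_log_rho
    (c : ℕ) (hc : 0 < c) (E : Type*) [Fintype E]
    (t h : E → Fin c) (hth : ∀ e, t e ≠ h e)
    (hpar : Function.Injective (fun e => ({t e, h e} : Finset (Fin c))))
    (kp km : E → ℝ) (hkp : ∀ e, 0 < kp e) (hkm : ∀ e, 0 < km e)
    (ρ : Fin c → ℝ) (hρ : ∀ i, 0 < ρ i) :
    (reactionLaplacian c t h kp km * Matrix.diagonal ρ).IsSymm ↔
      ∀ e, Real.log (kp e / km e) = Real.log (ρ (h e)) - Real.log (ρ (t e)) := by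
  have key : ∀ e : E, (Real.log (kp e / km e) = Real.log (ρ (h e)) - Real.log (ρ (t e)))
      ↔ kp e * ρ (t e) = km e * ρ (h e) := by
    intro e
    rw [Real.log_div (hkp e).ne' (hkm e).ne']
    constructor
    · intro hl
      have h1 : Real.log (kp e * ρ (t e)) = Real.log (km e * ρ (h e)) := by
        rw [Real.log_mul (hkp e).ne' (hρ (t e)).ne',
          Real.log_mul (hkm e).ne' (hρ (h e)).ne']
        linarith
      have h2 := congrArg Real.exp h1
      rwa [Real.exp_log (mul_pos (hkp e) (hρ (t e))), Real.exp_log (mul_pos (hkm e) (hρ (h e)))] at h2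
    · intro hm
      have h1 : Real.log (kp e * ρ (t e)) = Real.log (km e * ρ (h e)) := by rw [hm]
      rw [Real.log_mul (hkp e).ne' (hρ (t e)).ne',
        Real.log_mul (hkm e).ne' (hρ (h e)).ne'] at h1
      linarith
  simp only [key]
  rw [Matrix.IsSymm, ← Matrix.ext_iff]
  constructor
  · intro hs e
    have hij : h e ≠ t e := fun hh => hth e hh.symm
    have hA : Finset.univ.filter (fun e' => t e' = t e ∧ h e' = h e) = {e} := by
      ext e'
      simp only [Finset.mem_filter, Finset.mem_univ, true_and, Finset.mem_singleton]
      constructor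
      · rintro ⟨h1, h2⟩
        exact hpar (by simp only [h1, h2])
      · rintro rfl; exact ⟨rfl, rfl⟩
    have hB : Finset.univ.filter (fun e' => t e' = h e ∧ h e' = t e) = ∅ := by
      ext e'
      simp only [Finset.mem_filter, Finset.mem_univ, true_and, Finset.notMem_empty,
        iff_false]
      rintro ⟨h1, h2⟩
      have he' : e' = e := hpar (by simp only [h1, h2]; exact Finset.pair_comm _ _)
      rw [he'] at h1
      exact hth e h1
    have h1 := hs (t e) (h e)
    simp only [Matrix.transpose_apply, Matrix.mul_diagonal, reactionLaplacian,
      if_neg hij, if_neg (hth e), hA, hB, Finset.sum_singleton, Finset.sum_empty] at h1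
    nlinarith [h1]
  · intro hm i j
    simp only [Matrix.transpose_apply, Matrix.mul_diagonal, reactionLaplacian]
    by_cases hij : i = j
    · simp [hij]
    · rw [if_neg (fun hh => hij hh.symm), if_neg hij]
      simp only [neg_mul, add_mul, Finset.sum_mul, neg_add_rev]
      have eA : ∑ e' ∈ Finset.univ.filter (fun e' => t e' = i ∧ h e' = j), kp e' * ρ i
          = ∑ e' ∈ Finset.univ.filter (fun e' => t e' = i ∧ h e' = j), km e' * ρ j := by
        refine Finset.sum_congr rfl fun e' he' => ?_
        simp only [Finset.mem_filter] at he'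
        rw [← he'.2.1, ← he'.2.2]; exact hm e'
      have eB : ∑ e' ∈ Finset.univ.filter (fun e' => t e' = j ∧ h e' = i), km e' * ρ i
          = ∑ e' ∈ Finset.univ.filter (fun e' => t e' = j ∧ h e' = i), kp e' * ρ j := by
        refine Finset.sum_congr rfl fun e' he' => ?_
        simp only [Finset.mem_filter] at he'
        rw [← he'.2.1, ← he'.2.2]; exact (hm e').symm
      rw [eA, eB]; ring
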